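/- Let (Ω, F, μ) be a probability space, G ⊆ F a sub-σ-algebra, and X, Y real-valued random variables in L⁴(μ). Let C = μ[XY | G] − μ[X | G]·μ[Y | G] and V = μ[X² | G] − (μ[X | G])², and assume V ≥ h₁ almost everywhere for some constant h₁ > 0. Define b = C / V and a = μ[Y | G] − b·μ[X | G], and let u = E[(a + b·X)²] − E[(μ[Y | G])²]. Then u = E[ C² / V ]; in particular u ≥ 0, and u = 0 if and only if C = 0 almost everywhere. (Marginal utility identity, equation (6) of the paper.) -/

import Mathlib

open MeasureTheory
open scoped ENNReal

namespace MarginalUtilityAux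

variable {Ω : Type*} {m m0 : MeasurableSpace Ω} {μ : Measure Ω}

lemma mul_int2 [IsFiniteMeasure μ] {f g : Ω → ℝ} (hf : MemLp f 2 μ) (hg : MemLp g 2 μ) :
    Integrable (fun ω => f ω * g ω) μ := by
  have : MemLp (f • g) 1 μ := hg.smul hf (hpqr := ⟨by
    simp only [← one_div]; symm
    rw [ENNReal.div_add_div_same, ENNReal.div_eq_div_iff] <;> norm_num⟩)
  exact this.integrable le_rfl

lemma memL2_mul [IsFiniteMeasure μ] {f g : Ω → ℝ} (hf : MemLp f 4 μ) (hg : MemLp g 4 μ) :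
    MemLp (fun ω => f ω * g ω) 2 μ := by
  have : MemLp (f • g) 2 μ := hg.smul hf (hpqr := ⟨by
    simp only [← one_div]; symm
    rw [ENNReal.div_add_div_same, ENNReal.div_eq_div_iff] <;> norm_num⟩)
  exact this

lemma mul_int3 [IsFiniteMeasure μ] {f g h : Ω → ℝ} (hf : MemLp f 4 μ) (hg : MemLp g 2 μ)
    (hh : MemLp h 4 μ) : Integrable (fun ω => f ω * (g ω * h ω)) μ := by
  have h1 : MemLp (g • h) (4/3) μ := hh.smul hg (hpqr := ⟨by
    simp only [← one_div]; symm
    rw [one_div ((4:ℝ≥0∞)/3), ENNReal.inv_div (by norm_num) (by norm_num)]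
    rw [show (1:ℝ≥0∞)/2 = 2/4 by rw [ENNReal.div_eq_div_iff] <;> norm_num]
    rw [ENNReal.div_add_div_same]; norm_num⟩)
  have h2 : MemLp (f • (g • h)) 1 μ := h1.smul hf (hpqr := ⟨by
    simp only [← one_div]; symm
    rw [one_div ((4:ℝ≥0∞)/3), ENNReal.inv_div (by norm_num) (by norm_num)]
    rw [ENNReal.div_add_div_same, ENNReal.div_eq_div_iff] <;> norm_num⟩)
  exact h2.integrable le_rfl

lemma memL2_condexp [IsFiniteMeasure μ] (hm : m ≤ m0) {f : Ω → ℝ}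
    (hf : MemLp f 2 μ) : MemLp (μ[f|m]) 2 μ := by
  have : SigmaFinite (μ.trim hm) := by
    have : IsFiniteMeasure (μ.trim hm) := isFiniteMeasure_trim hm
    infer_instance
  set g : Lp ℝ 2 μ := (condExpL2 ℝ ℝ hm (hf.toLp f) : Lp ℝ 2 μ) with hg
  have hgm : AEStronglyMeasurable[m] (⇑g) μ := aestronglyMeasurable_condExpL2 hm _
  have hgL2 : MemLp (⇑g) 2 μ := Lp.memLp g
  have hgi : Integrable (⇑g) μ := hgL2.integrable one_le_two
  have heq : ⇑g =ᵐ[μ] μ[f|m] := by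
    refine ae_eq_condExp_of_forall_setIntegral_eq hm (hf.integrable one_le_two)
      (fun s _ _ => hgi.integrableOn) (fun s hs hμs => ?_) hgm
    have h1 : ∫ x in s, (⇑g) x ∂μ = ∫ x in s, (hf.toLp f : Ω → ℝ) x ∂μ :=
      integral_condExpL2_eq (𝕜 := ℝ) hm (hf.toLp f) hs hμs.ne
    rw [h1]
    exact setIntegral_congr_ae (hm s hs) ((hf.coeFn_toLp).mono fun x hx _ => hx)
  exact hgL2.ae_eq heq

/-- conditional second moment identity. -/
lemma condexp_sq_sub (hm : m ≤ m0) [IsProbabilityMeasure μ] {f : Ω → ℝ}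
    (hf : MemLp f 2 μ) :
    (μ[(fun ω => (f ω - (μ[f|m]) ω)^2)|m]) =ᵐ[μ]
      fun ω => (μ[(fun ω' => f ω'^2)|m]) ω - ((μ[f|m]) ω)^2 := by
  have : SigmaFinite (μ.trim hm) := by
    have : IsFiniteMeasure (μ.trim hm) := isFiniteMeasure_trim hm
    infer_instance
  set g := μ[f|m] with hgdef
  have hg2 : MemLp g 2 μ := memL2_condexp hm hf
  have hgm : StronglyMeasurable[m] g := stronglyMeasurable_condExp
  have hfi : Integrable f μ := hf.integrable one_le_two
  have hf2i : Integrable (fun ω => f ω^2) μ := hf.integrable_sq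
  have hg2i : Integrable (fun ω => g ω^2) μ := hg2.integrable_sq
  have hgfi : Integrable (fun ω => g ω * f ω) μ := mul_int2 hg2 hf
  have hpull : (μ[(fun ω => g ω * f ω)|m]) =ᵐ[μ] fun ω => g ω * g ω := by
    have := condExp_mul_of_stronglyMeasurable_left (μ := μ) hgm (by exact hgfi) hfi
    exact this.mono fun ω hω => hω
  set F1 : Ω → ℝ := fun ω => f ω^2 with hF1
  set F2 : Ω → ℝ := fun ω => g ω * f ω with hF2
  set F3 : Ω → ℝ := fun ω => g ω^2 with hF3
  have hexp : (fun ω => (f ω - g ω)^2) = (F1 - (2:ℝ) • F2) + F3 := by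
    funext ω; simp only [Pi.add_apply, Pi.sub_apply, Pi.smul_apply, smul_eq_mul, hF1, hF2, hF3]
    ring
  have hF2i : Integrable ((2:ℝ) • F2) μ := hgfi.smul 2
  have hadd := condExp_add (μ := μ) (m := m) (hf2i.sub hF2i) hg2i
  have hsub := condExp_sub (μ := μ) (m := m) hf2i hF2i
  have hsmul : (μ[((2:ℝ) • F2)|m]) =ᵐ[μ] (2:ℝ) • (μ[F2|m]) := condExp_smul (2:ℝ) F2 m
  rw [hexp]
  filter_upwards [hadd, hsub, hsmul, hpull] with ω h1 h2 h3 h4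
  simp only [Pi.add_apply, Pi.sub_apply, Pi.smul_apply, smul_eq_mul] at h1 h2 h3 ⊢
  rw [h1, h2, h3, h4]
  have : (μ[F3|m]) = F3 := condExp_of_stronglyMeasurable hm (hgm.pow 2) hg2i
  rw [this]
  simp only [hF3]
  ring

/-- conditional Jensen for squares. -/
lemma condexp_sq_le (hm : m ≤ m0) [IsProbabilityMeasure μ] {f : Ω → ℝ}
    (hf : MemLp f 2 μ) :
    ∀ᵐ ω ∂μ, ((μ[f|m]) ω)^2 ≤ (μ[(fun ω' => f ω'^2)|m]) ω := by
  have h0 : 0 ≤ᵐ[μ] μ[(fun ω => (f ω - (μ[f|m]) ω)^2)|m] :=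
    condExp_nonneg (Filter.Eventually.of_forall fun ω => sq_nonneg _)
  filter_upwards [h0, condexp_sq_sub hm hf] with ω h0ω heq
  simp only [Pi.zero_apply] at h0ω
  rw [heq] at h0ω
  linarith

/-- L⁴ membership of conditional expectation. -/
lemma memL4_condexp (hm : m ≤ m0) [IsProbabilityMeasure μ] {f : Ω → ℝ}
    (hf : MemLp f 4 μ) : MemLp (μ[f|m]) 4 μ := by
  set g := μ[f|m] with hgdef
  have hf2 : MemLp f 2 μ := hf.mono_exponent (by norm_num)
  have hfsq2 : MemLp (fun ω => f ω^2) 2 μ := by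
    have := memL2_mul hf hf
    simpa [pow_two] using this
  set K := μ[(fun ω' => f ω'^2)|m] with hKdef
  have hK2 : MemLp K 2 μ := memL2_condexp hm hfsq2
  have hj : ∀ᵐ ω ∂μ, (g ω)^2 ≤ K ω := condexp_sq_le hm hf2
  have hgm : StronglyMeasurable[m] g := stronglyMeasurable_condExp
  have hgsq2 : MemLp (fun ω => g ω^2) 2 μ := by
    refine hK2.of_le (((hgm.pow 2).mono hm).aestronglyMeasurable) ?_
    filter_upwards [hj] with ω hω
    rw [Real.norm_eq_abs, Real.norm_eq_abs, abs_of_nonneg (sq_nonneg _)]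
    exact hω.trans (le_abs_self _)
  have h42 : (4:ℝ≥0∞)/2 = 2 := by
    rw [show (4:ℝ≥0∞) = 2*2 by norm_num, mul_div_assoc, ENNReal.div_self] <;> norm_num
  refine (memLp_norm_rpow_iff (p := 4) (q := 2) (μ := μ)
    ((hgm.mono hm).aestronglyMeasurable) (by norm_num) (by norm_num)).mp ?_
  rw [h42]
  have hfun : (fun x => ‖g x‖ ^ ((2:ℝ≥0∞)).toReal) = fun ω => g ω^2 := by
    funext ω
    rw [show ((2:ℝ≥0∞)).toReal = ((2:ℕ):ℝ) by norm_num, Real.rpow_natCast]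
    simp [sq_abs]
  rw [hfun]
  exact hgsq2

/-- pull-out at lintegral level -/
lemma lintegral_mul_condexp (hm : m ≤ m0) [IsProbabilityMeasure μ]
    {φ : Ω → ℝ≥0∞} (hφ : Measurable[m] φ) {ψ : Ω → ℝ}
    (hψi : Integrable ψ μ) (hψ0 : 0 ≤ᵐ[μ] ψ) :
    ∫⁻ ω, φ ω * ENNReal.ofReal (ψ ω) ∂μ = ∫⁻ ω, φ ω * ENNReal.ofReal ((μ[ψ|m]) ω) ∂μ := by
  have hsf : SigmaFinite (μ.trim hm) := by
    have : IsFiniteMeasure (μ.trim hm) := isFiniteMeasure_trim hm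
    infer_instance
  set d₁ : Ω → ℝ≥0∞ := fun ω => ENNReal.ofReal (ψ ω) with hd₁
  set d₂ : Ω → ℝ≥0∞ := fun ω => ENNReal.ofReal ((μ[ψ|m]) ω) with hd₂
  have hd₁m : AEMeasurable d₁ μ :=
    ENNReal.measurable_ofReal.comp_aemeasurable hψi.aemeasurable
  have hd₂m : Measurable d₂ := ENNReal.measurable_ofReal.comp
    (stronglyMeasurable_condExp.mono hm).measurable
  set ν₁ := μ.withDensity d₁ with hν₁
  set ν₂ := μ.withDensity d₂ with hν₂
  have hagree : ∀ s, MeasurableSet[m] s → ν₁ s = ν₂ s := by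
    intro s hs
    have hs0 : MeasurableSet s := hm s hs
    rw [hν₁, hν₂, withDensity_apply _ hs0, withDensity_apply _ hs0]
    have e1 : ∫⁻ ω in s, d₁ ω ∂μ = ENNReal.ofReal (∫ ω in s, ψ ω ∂μ) :=
      (ofReal_integral_eq_lintegral_ofReal hψi.integrableOn
        (ae_restrict_of_ae hψ0)).symm
    have e2 : ∫⁻ ω in s, d₂ ω ∂μ = ENNReal.ofReal (∫ ω in s, (μ[ψ|m]) ω ∂μ) :=
      (ofReal_integral_eq_lintegral_ofReal integrable_condExp.integrableOn
        (ae_restrict_of_ae (condExp_nonneg hψ0))).symm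
    rw [e1, e2, setIntegral_condExp hm hψi hs]
  have htrim : ν₁.trim hm = ν₂.trim hm := by
    refine @Measure.ext Ω m (ν₁.trim hm) (ν₂.trim hm) fun s hs => ?_
    rw [show (ν₁.trim hm) s = ν₁ s from trim_measurableSet_eq hm hs,
      show (ν₂.trim hm) s = ν₂ s from trim_measurableSet_eq hm hs]
    exact hagree s hs
  have l1 : ∫⁻ ω, φ ω ∂ν₁ = ∫⁻ ω, φ ω ∂ν₂ := by
    rw [← lintegral_trim hm hφ, ← lintegral_trim hm hφ, htrim]
  have w1 : ∫⁻ ω, φ ω ∂ν₁ = ∫⁻ ω, d₁ ω * φ ω ∂μ := by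
    rw [hν₁, lintegral_withDensity_eq_lintegral_mul₀ hd₁m
      ((hφ.mono hm le_rfl).aemeasurable)]
    rfl
  have w2 : ∫⁻ ω, φ ω ∂ν₂ = ∫⁻ ω, d₂ ω * φ ω ∂μ := by
    rw [hν₂, lintegral_withDensity_eq_lintegral_mul₀ hd₂m.aemeasurable
      ((hφ.mono hm le_rfl).aemeasurable)]
    rfl
  calc ∫⁻ ω, φ ω * d₁ ω ∂μ = ∫⁻ ω, d₁ ω * φ ω ∂μ := by simp_rw [mul_comm]
    _ = ∫⁻ ω, φ ω ∂ν₁ := w1.symm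
    _ = ∫⁻ ω, φ ω ∂ν₂ := l1
    _ = ∫⁻ ω, d₂ ω * φ ω ∂μ := w2
    _ = ∫⁻ ω, φ ω * d₂ ω ∂μ := by simp_rw [mul_comm]

end MarginalUtilityAux

open MarginalUtilityAux

/-- **Marginal utility identity (equation (6)).** With `C = Cov[X, Y | G]`,
`V = Var[X | G] ≥ h₁ > 0` a.e., `b = C/V`, `a = E[Y|G] - b·E[X|G]` and
`u = E[(a + b·X)²] - E[(E[Y|G])²]`, one has `u = E[C²/V]`; in particular `u ≥ 0`,
and `u = 0` if and only if `C = 0` almost everywhere. -/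
theorem marginal_utility_identity
    {Ω : Type*} {F : MeasurableSpace Ω} (μ : Measure Ω) [IsProbabilityMeasure μ]
    (G : MeasurableSpace Ω) (hG : G ≤ F)
    (X Y : Ω → ℝ) (hX : MemLp X 4 μ) (hY : MemLp Y 4 μ)
    (h₁ : ℝ) (hh₁ : 0 < h₁)
    (C : Ω → ℝ)
    (hC : C = fun ω => (μ[(fun ω' => X ω' * Y ω')|G]) ω - (μ[X|G]) ω * (μ[Y|G]) ω)
    (V : Ω → ℝ)
    (hV : V = fun ω => (μ[(fun ω' => X ω' ^ 2)|G]) ω - ((μ[X|G]) ω) ^ 2)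
    (hVlb : ∀ᵐ ω ∂μ, h₁ ≤ V ω)
    (b : Ω → ℝ) (hb : b = fun ω => C ω / V ω)
    (a : Ω → ℝ) (ha : a = fun ω => (μ[Y|G]) ω - b ω * (μ[X|G]) ω)
    (u : ℝ)
    (hu : u = ∫ ω, (a ω + b ω * X ω) ^ 2 ∂μ - ∫ ω, ((μ[Y|G]) ω) ^ 2 ∂μ) :
    u = ∫ ω, C ω ^ 2 / V ω ∂μ ∧ 0 ≤ u ∧ (u = 0 ↔ C =ᵐ[μ] 0) := by
  have hsf : SigmaFinite (μ.trim hG) := by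
    have : IsFiniteMeasure (μ.trim hG) := isFiniteMeasure_trim hG
    infer_instance
  set mX := μ[X|G] with hmXdef
  set mY := μ[Y|G] with hmYdef
  have hX2 : MemLp X 2 μ := hX.mono_exponent (by norm_num)
  have hY2 : MemLp Y 2 μ := hY.mono_exponent (by norm_num)
  have hXi : Integrable X μ := hX2.integrable one_le_two
  have hmX4 : MemLp mX 4 μ := memL4_condexp hG hX
  have hmY4 : MemLp mY 4 μ := memL4_condexp hG hY
  have hmY2 : MemLp mY 2 μ := hmY4.mono_exponent (by norm_num)
  set h : Ω → ℝ := fun ω => X ω - mX ω with hhdef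
  have hh4 : MemLp h 4 μ := hX.sub hmX4
  have hh2 : MemLp h 2 μ := hh4.mono_exponent (by norm_num)
  have hhi : Integrable h μ := hh2.integrable one_le_two
  have hXY2 : MemLp (fun ω => X ω * Y ω) 2 μ := memL2_mul hX hY
  have hmXY2 : MemLp (μ[(fun ω' => X ω' * Y ω')|G]) 2 μ := memL2_condexp hG hXY2
  have hC2 : MemLp C 2 μ := by
    rw [hC]; exact hmXY2.sub (memL2_mul hmX4 hmY4)
  have hCm : StronglyMeasurable[G] C := by
    rw [hC]
    exact stronglyMeasurable_condExp.sub (stronglyMeasurable_condExp.mul stronglyMeasurable_condExp)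
  have hVm : StronglyMeasurable[G] V := by
    rw [hV]
    exact stronglyMeasurable_condExp.sub (stronglyMeasurable_condExp.pow 2)
  have hbm : Measurable[G] b := by
    rw [hb]; exact hCm.measurable.div hVm.measurable
  have hbsm : StronglyMeasurable[G] b := hbm.stronglyMeasurable
  have hbaesm : AEStronglyMeasurable[F] b μ := (hbsm.mono hG).aestronglyMeasurable
  have hb2 : MemLp b 2 μ := by
    refine (hC2.const_mul h₁⁻¹).of_le hbaesm ?_
    filter_upwards [hVlb] with ω hVω
    have hV0 : 0 < V ω := lt_of_lt_of_le hh₁ hVω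
    rw [hb]
    simp only [Real.norm_eq_abs, abs_div, abs_mul, abs_of_nonneg (inv_nonneg.mpr hh₁.le),
      div_eq_inv_mul, abs_inv]
    rw [abs_of_nonneg hV0.le]
    exact mul_le_mul_of_nonneg_right (inv_anti₀ hh₁ hVω) (abs_nonneg _)
  set W : Ω → ℝ := fun ω => C ω^2 / V ω with hWdef
  have hW0 : 0 ≤ᵐ[μ] W := by
    filter_upwards [hVlb] with ω hVω
    exact div_nonneg (sq_nonneg _) (le_trans hh₁.le hVω)
  have hWaesm : AEStronglyMeasurable[F] W μ :=
    ((((hCm.measurable.pow_const 2).div hVm.measurable).stronglyMeasurable).mono hG).aestronglyMeasurable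
  have hWi : Integrable W μ := by
    refine Integrable.mono' ((hC2.integrable_sq).const_mul h₁⁻¹) hWaesm ?_
    filter_upwards [hVlb] with ω hVω
    have hV0 : 0 < V ω := lt_of_lt_of_le hh₁ hVω
    rw [Real.norm_eq_abs, abs_of_nonneg (div_nonneg (sq_nonneg _) hV0.le), div_eq_inv_mul]
    exact mul_le_mul_of_nonneg_right (inv_anti₀ hh₁ hVω) (sq_nonneg _)
  -- conditional variance identity
  have hVeq : (μ[(fun ω => h ω^2)|G]) =ᵐ[μ] V := by
    rw [hV]; exact condexp_sq_sub hG hX2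
  -- T3 : ∫ (b h)² = ∫ W
  have hψi : Integrable (fun ω => h ω^2) μ := hh2.integrable_sq
  have hψ0 : 0 ≤ᵐ[μ] (fun ω => h ω^2) := Filter.Eventually.of_forall fun ω => sq_nonneg _
  have hφm : Measurable[G] (fun ω => ENNReal.ofReal (b ω^2)) :=
    ENNReal.measurable_ofReal.comp (hbm.pow_const 2)
  have key := lintegral_mul_condexp hG hφm hψi hψ0
  have key2 : ∫⁻ ω, ENNReal.ofReal (b ω^2) * ENNReal.ofReal (h ω^2) ∂μ
      = ∫⁻ ω, ENNReal.ofReal (W ω) ∂μ := by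
    rw [key]
    refine lintegral_congr_ae ?_
    filter_upwards [hVeq, hVlb] with ω hVω hlb
    rw [hVω, ← ENNReal.ofReal_mul (sq_nonneg _)]
    congr 1
    have hV0 : V ω ≠ 0 := (lt_of_lt_of_le hh₁ hlb).ne'
    rw [hb, hWdef]
    field_simp
  have keyL : ∫⁻ ω, ENNReal.ofReal ((b ω * h ω)^2) ∂μ = ENNReal.ofReal (∫ ω, W ω ∂μ) := by
    rw [show (fun ω => ENNReal.ofReal ((b ω * h ω)^2))
        = fun ω => ENNReal.ofReal (b ω^2) * ENNReal.ofReal (h ω^2) from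
      funext fun ω => by rw [mul_pow, ENNReal.ofReal_mul (sq_nonneg _)]]
    rw [key2, ← ofReal_integral_eq_lintegral_ofReal hWi hW0]
  have hh_aesm : AEStronglyMeasurable[F] h μ :=
    hX2.aestronglyMeasurable.sub ((stronglyMeasurable_condExp.mono hG).aestronglyMeasurable)
  have hbh_aesm : AEStronglyMeasurable[F] (fun ω => (b ω * h ω)^2) μ := by
    have hq : AEStronglyMeasurable[F] (fun ω => b ω * h ω) μ := hbaesm.mul hh_aesm
    simpa [pow_two, Pi.mul_def] using hq.mul hq
  have hT3i : Integrable (fun ω => (b ω * h ω)^2) μ := by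
    refine ⟨hbh_aesm, ?_⟩
    rw [hasFiniteIntegral_iff_ofReal (Filter.Eventually.of_forall fun ω => sq_nonneg _)]
    rw [keyL]
    exact ENNReal.ofReal_lt_top
  have hT3 : ∫ ω, (b ω * h ω)^2 ∂μ = ∫ ω, W ω ∂μ := by
    rw [integral_eq_lintegral_of_nonneg_ae (Filter.Eventually.of_forall fun ω => sq_nonneg _)
      hbh_aesm, keyL, ENNReal.toReal_ofReal (integral_nonneg_of_ae hW0)]
  -- T2 : ∫ (mY b) h = 0
  set g2 : Ω → ℝ := fun ω => mY ω * b ω with hg2def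
  have hg2sm : StronglyMeasurable[G] g2 := stronglyMeasurable_condExp.mul hbsm
  have hT2i : Integrable (fun ω => g2 ω * h ω) μ := by
    have := mul_int3 hmY4 hb2 hh4
    simpa [hg2def, mul_assoc] using this
  have hmh0 : (μ[h|G]) =ᵐ[μ] 0 := by
    have hsub : (μ[h|G]) =ᵐ[μ] μ[X|G] - μ[mX|G] := condExp_sub hXi integrable_condExp G
    have hfix : (μ[mX|G]) = mX :=
      condExp_of_stronglyMeasurable hG stronglyMeasurable_condExp integrable_condExp
    filter_upwards [hsub] with ω hω
    simp only [Pi.zero_apply]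
    rw [hω, Pi.sub_apply, hfix]
    simp [hmXdef]
  have hT2 : ∫ ω, g2 ω * h ω ∂μ = 0 := by
    have hpull : (μ[(g2 * h)|G]) =ᵐ[μ] g2 * μ[h|G] :=
      condExp_mul_of_stronglyMeasurable_left hg2sm (by exact hT2i) hhi
    have hz : (μ[(g2 * h)|G]) =ᵐ[μ] 0 := by
      refine hpull.trans ?_
      filter_upwards [hmh0] with ω hω
      simp [Pi.mul_apply, hω]
    calc ∫ ω, g2 ω * h ω ∂μ = ∫ ω, (μ[(g2 * h)|G]) ω ∂μ := (integral_condExp hG).symm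
      _ = ∫ ω, (0:ℝ) ∂μ := integral_congr_ae (hz.mono fun ω hω => by simpa using hω)
      _ = 0 := integral_zero _ _
  -- assembly
  have hI1 : Integrable (fun ω => mY ω^2) μ := hmY2.integrable_sq
  have hptw : ∀ ω, (a ω + b ω * X ω)^2 = mY ω^2 + (2*(g2 ω * h ω) + (b ω * h ω)^2) := by
    intro ω
    simp only [ha, hg2def, hhdef]
    ring
  have hIsum : ∫ ω, (a ω + b ω * X ω)^2 ∂μ
      = ∫ ω, mY ω^2 ∂μ + (2 * ∫ ω, g2 ω * h ω ∂μ + ∫ ω, (b ω * h ω)^2 ∂μ) := by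
    have hI2' : Integrable (fun ω => 2*(g2 ω * h ω)) μ := hT2i.const_mul 2
    have hI23 : Integrable (fun ω => 2*(g2 ω * h ω) + (b ω * h ω)^2) μ := hI2'.add hT3i
    rw [integral_congr_ae (Filter.Eventually.of_forall hptw)]
    rw [integral_add hI1 hI23, integral_add hI2' hT3i, integral_const_mul]
  have hmain : u = ∫ ω, W ω ∂μ := by
    rw [hu, hIsum, hT2, hT3]
    ring
  refine ⟨hmain, ?_, ?_⟩
  · rw [hmain]; exact integral_nonneg_of_ae hW0
  · rw [hmain, integral_eq_zero_iff_of_nonneg_ae hW0 hWi]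
    constructor
    · intro hWz
      filter_upwards [hWz, hVlb] with ω hω hVω
      have hVne : V ω ≠ 0 := (lt_of_lt_of_le hh₁ hVω).ne'
      simp only [Pi.zero_apply] at hω ⊢
      have hC2z : C ω^2 = 0 := by
        rcases div_eq_zero_iff.mp hω with h' | h'
        · exact h'
        · exact absurd h' hVne
      exact sq_eq_zero_iff.mp hC2z
    · intro hCz
      filter_upwards [hCz] with ω hω
      simp only [Pi.zero_apply] at hω ⊢
      rw [hWdef]
      simp [hω]
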